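/- Let P ⊆ ℝⁿ be a nonempty Γ-rational polyhedron, let u ∈ ℤⁿ and a ∈ K× satisfy val(a) + ⟨u,v⟩ ≥ 0 for all v ∈ P, and let v' ∈ ℝⁿ satisfy ⟨u,v'⟩ > 0. Then the monomial a·χ^u lies in 𝔪·R[M]^{v'+P}, where v'+P = {v' + v : v ∈ P} is the translated polyhedron. (In particular, such a monomial vanishes modulo the maximal ideal 𝔪.) -/

import Mathlib

open scoped BigOperators

/-- A real-valued nonarchimedean valuation on a field `K`, written additively with
values in `ℝ ∪ {∞}`. -/
structure NAVal (K : Type*) [Field K] where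
  v : K → WithTop ℝ
  v_eq_top_iff : ∀ a : K, v a = ⊤ ↔ a = 0
  v_mul : ∀ a b : K, v (a * b) = v a + v b
  v_add : ∀ a b : K, min (v a) (v b) ≤ v (a + b)

/-- The valuation is nontrivial. -/
def NAVal.IsNontrivial {K : Type*} [Field K] (ν : NAVal K) : Prop :=
  ∃ a : K, ν.v a ≠ 0 ∧ ν.v a ≠ ⊤

/-- The value group `Γ = val(K×) ⊆ ℝ`. -/
def NAVal.valueGroup {K : Type*} [Field K] (ν : NAVal K) : Set ℝ :=
  {γ : ℝ | ∃ a : K, a ≠ 0 ∧ ν.v a = (γ : WithTop ℝ)}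

/-- The standard pairing `⟨u, x⟩` between `u ∈ ℤⁿ` and `x ∈ ℝⁿ`. -/
def pairing {n : ℕ} (u : Fin n → ℤ) (x : Fin n → ℝ) : ℝ :=
  ∑ i, (u i : ℝ) * x i

/-- The tilted algebra `R[M]^S ⊆ K[M]`: Laurent polynomials `f = Σ a_u χ^u` with
`val(a_u) + ⟨u, x⟩ ≥ 0` for all `u ∈ M` and all `x ∈ S`. -/
def tilted {K : Type*} [Field K] (ν : NAVal K) {n : ℕ} (S : Set (Fin n → ℝ)) :
    Set (AddMonoidAlgebra K (Fin n → ℤ)) :=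
  {f | ∀ u : Fin n → ℤ, ∀ x ∈ S, (0 : WithTop ℝ) ≤ ν.v (f.coeff u) + ((pairing u x : ℝ) : WithTop ℝ)}

/-- `P ⊆ ℝⁿ` is a `Γ`-rational polyhedron: a finite intersection of halfspaces
`{x : ⟨u, x⟩ ≥ γ}` with `u ∈ ℤⁿ` and `γ ∈ Γ`. -/
def IsGammaPolyhedron {K : Type*} [Field K] (ν : NAVal K) {n : ℕ}
    (P : Set (Fin n → ℝ)) : Prop :=
  ∃ (m : ℕ) (u : Fin m → Fin n → ℤ) (γ : Fin m → ℝ),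
    (∀ i, γ i ∈ ν.valueGroup) ∧ P = {x | ∀ i, γ i ≤ pairing (u i) x}

/-- A `Γ`-rational polytope is a bounded `Γ`-rational polyhedron. -/
def IsGammaPolytope {K : Type*} [Field K] (ν : NAVal K) {n : ℕ}
    (P : Set (Fin n → ℝ)) : Prop :=
  IsGammaPolyhedron ν P ∧ Bornology.IsBounded P

/-- The ideal `𝔪 · R[M]^S` of the tilted algebra: finite sums `Σ cᵢ • fᵢ` with
`val(cᵢ) > 0` and `fᵢ ∈ R[M]^S`. -/
def mSmulTilted {K : Type*} [Field K] (ν : NAVal K) {n : ℕ} (S : Set (Fin n → ℝ)) :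
    Set (AddMonoidAlgebra K (Fin n → ℤ)) :=
  {f | ∃ (m : ℕ) (c : Fin m → K) (g : Fin m → AddMonoidAlgebra K (Fin n → ℤ)),
    (∀ i, (0 : WithTop ℝ) < ν.v (c i)) ∧ (∀ i, g i ∈ tilted ν S) ∧
    f = ∑ i, c i • g i}


section Helpers

variable {K : Type*} [Field K] (ν : NAVal K)

lemma NAVal.v_ne_top {a : K} (ha : a ≠ 0) : ν.v a ≠ ⊤ := by
  simpa [ν.v_eq_top_iff] using ha

lemma NAVal.exists_real {a : K} (ha : a ≠ 0) : ∃ r : ℝ, ν.v a = (r : WithTop ℝ) := by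
  rcases (WithTop.ne_top_iff_exists.mp (ν.v_ne_top ha)) with ⟨r, hr⟩
  exact ⟨r, hr.symm⟩

lemma NAVal.v_one : ν.v 1 = 0 := by
  rcases ν.exists_real (one_ne_zero (α := K)) with ⟨r, hr⟩
  have h := ν.v_mul 1 1
  rw [one_mul, hr] at h
  have h2 : r = r + r := by exact_mod_cast h
  have h3 : r = 0 := by linarith
  rw [hr, h3]; rfl

lemma NAVal.v_inv {a : K} (ha : a ≠ 0) {r : ℝ} (hr : ν.v a = (r : WithTop ℝ)) :
    ν.v a⁻¹ = ((-r : ℝ) : WithTop ℝ) := by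
  rcases ν.exists_real (inv_ne_zero ha) with ⟨s, hs⟩
  have h := ν.v_mul a a⁻¹
  rw [mul_inv_cancel₀ ha, ν.v_one, hr, hs] at h
  have h2 : (0 : ℝ) = r + s := by exact_mod_cast h
  have h3 : s = -r := by linarith
  rw [hs, h3]

lemma NAVal.v_pow {a : K} {r : ℝ} (hr : ν.v a = (r : WithTop ℝ)) (N : ℕ) :
    ν.v (a ^ N) = (((N : ℝ) * r : ℝ) : WithTop ℝ) := by
  induction N with
  | zero => simpa using ν.v_one
  | succ k ih =>
      have h : ν.v (a ^ (k + 1)) = ν.v a + ν.v (a ^ k) := by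
        rw [pow_succ, mul_comm, ν.v_mul]
      rw [h, hr, ih, ← WithTop.coe_add]
      congr 1
      push_cast
      ring

lemma NAVal.exists_small [IsAlgClosed K] (hnt : ν.IsNontrivial) {ε : ℝ} (hε : 0 < ε) :
    ∃ (c : K) (s : ℝ), c ≠ 0 ∧ ν.v c = (s : WithTop ℝ) ∧ 0 < s ∧ s ≤ ε := by
  obtain ⟨b, r, hb0, hbr, hrpos⟩ :
      ∃ (b : K) (r : ℝ), b ≠ 0 ∧ ν.v b = (r : WithTop ℝ) ∧ 0 < r := by
    obtain ⟨a, ha0, hatop⟩ := hnt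
    have hane : a ≠ 0 := by
      intro h; apply hatop; rw [(ν.v_eq_top_iff a).mpr h]
    rcases ν.exists_real hane with ⟨r, hr⟩
    have hrne : r ≠ 0 := by
      intro h; apply ha0; rw [hr, h]; rfl
    rcases lt_or_gt_of_ne hrne with h | h
    · exact ⟨a⁻¹, -r, inv_ne_zero hane, ν.v_inv hane hr, by linarith⟩
    · exact ⟨a, r, hane, hr, h⟩
  obtain ⟨N, hN⟩ := exists_nat_ge (r / ε)
  have hN0 : 0 < (N : ℝ) := lt_of_lt_of_le (div_pos hrpos hε) hN
  have hNnat : 0 < N := by exact_mod_cast hN0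
  obtain ⟨c, hc⟩ := IsAlgClosed.exists_pow_nat_eq b hNnat
  have hc0 : c ≠ 0 := by
    intro h; apply hb0; rw [← hc, h, zero_pow hNnat.ne']
  rcases ν.exists_real hc0 with ⟨s, hs⟩
  have hpow := ν.v_pow hs N
  rw [hc, hbr] at hpow
  have hNs : r = (N : ℝ) * s := by exact_mod_cast hpow
  have hsval : s = r / N := by field_simp; linarith
  refine ⟨c, s, hc0, hs, by rw [hsval]; positivity, ?_⟩
  rw [hsval, div_le_iff₀ hN0]
  have h := mul_le_mul_of_nonneg_right hN hε.le
  rw [div_mul_cancel₀ _ hε.ne'] at h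
  linarith

lemma pairing_add {n : ℕ} (u : Fin n → ℤ) (x y : Fin n → ℝ) :
    pairing u (x + y) = pairing u x + pairing u y := by
  simp [pairing, mul_add, Finset.sum_add_distrib]

end Helpers

/-- if `P` is a nonempty `Γ`-rational polyhedron, `u ∈ ℤⁿ`, `a ∈ K×`
satisfy `val(a) + ⟨u, x⟩ ≥ 0` for all `x ∈ P`, and `v' ∈ ℝⁿ` satisfies `⟨u, v'⟩ > 0`,
then the monomial `a·χ^u` lies in `𝔪·R[M]^{v' + P}`. -/
theorem single_mem_mSmulTilted_translate {K : Type*} [Field K] [IsAlgClosed K]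
    (ν : NAVal K) (hnt : ν.IsNontrivial) {n : ℕ} (hn : 1 ≤ n)
    (P : Set (Fin n → ℝ)) (hpoly : IsGammaPolyhedron ν P) (hne : P.Nonempty)
    (u : Fin n → ℤ) (a : K) (ha : a ≠ 0)
    (hval : ∀ x ∈ P, (0 : WithTop ℝ) ≤ ν.v a + ((pairing u x : ℝ) : WithTop ℝ))
    (v' : Fin n → ℝ) (hv' : 0 < pairing u v') :
    (AddMonoidAlgebra.single u a) ∈ mSmulTilted ν ((fun x => v' + x) '' P) := by

  obtain ⟨c, s, hc0, hcs, hspos, hsle⟩ := ν.exists_small hnt hv'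
  obtain ⟨α, hα⟩ := ν.exists_real ha
  refine ⟨1, fun _ => c, fun _ => AddMonoidAlgebra.single u (c⁻¹ * a), ?_, ?_, ?_⟩
  · intro _; rw [hcs]; exact_mod_cast hspos
  · intro _
    intro w x hx
    obtain ⟨y, hy, rfl⟩ := hx
    by_cases hw : u = w
    · subst hw
      have hcoef : (AddMonoidAlgebra.single u (c⁻¹ * a)).coeff u = c⁻¹ * a :=
        Finsupp.single_eq_same
      rw [hcoef, ν.v_mul, ν.v_inv hc0 hcs, hα, pairing_add]
      have h1 : (0 : ℝ) ≤ α + pairing u y := by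
        have := hval y hy
        rw [hα] at this
        exact_mod_cast this
      have : (0 : ℝ) ≤ -s + α + (pairing u v' + pairing u y) := by linarith
      exact_mod_cast this
    · have hcoef : (AddMonoidAlgebra.single u (c⁻¹ * a)).coeff w = 0 :=
        Finsupp.single_eq_of_ne' hw
      rw [hcoef, (ν.v_eq_top_iff 0).mpr rfl, top_add]
      exact le_top
  · rw [Fin.sum_univ_one, AddMonoidAlgebra.smul_single']
    rw [mul_inv_cancel_left₀ hc0]
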